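/- With T the crossing-time map defined implicitly by X(T(x,y), x, y) = -x for the flow of a C^3 planar vector field (f,g) with f(0,0) ≠ 0, the second derivative satisfies ∂²T/∂y² (0,0) = 0. -/

import Mathlib

open Set Filter

/-- One-sided escape-time estimate: a path whose speed is at most `M` while it stays
in the ball of radius `r` satisfies `‖p u - p 0‖ ≤ 2*M*u` up to time `ε`. -/
lemma escape_aux (p d : ℝ → ℝ × ℝ) (M r ε : ℝ)
    (hM : 0 < M) (hε : 0 < ε) (hεM : 2*M*ε ≤ r/2)
    (hd : ∀ s, HasDerivAt p (d s) s)
    (hbd : ∀ s, ‖p s‖ ≤ r → ‖d s‖ ≤ M)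
    (hp0 : ‖p 0‖ ≤ r/2) :
    ∀ u ∈ Set.Icc (0:ℝ) ε, ‖p u - p 0‖ ≤ 2*M*u := by
  have hcont : Continuous p := continuous_iff_continuousAt.2 fun s => (hd s).continuousAt
  set S : Set ℝ := {u : ℝ | ‖p u - p 0‖ ≤ 2*M*u} with hSdef
  have hSclosed : IsClosed S := by
    apply isClosed_le
    · exact (hcont.sub continuous_const).norm
    · exact continuous_const.mul continuous_id
  have key : Icc (0:ℝ) ε ⊆ S := by
    apply IsClosed.Icc_subset_of_forall_exists_gt (hSclosed.inter isClosed_Icc)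
    · simp [hSdef]
    · rintro x ⟨hxS, hx0, hxε⟩ z hz
      -- `p x` is still in the ball
      have hpx : ‖p x‖ ≤ r := by
        have h1 : ‖p x‖ ≤ ‖p x - p 0‖ + ‖p 0‖ := by
          have := norm_add_le (p x - p 0) (p 0); simpa using this
        have h2 : 2*M*x ≤ 2*M*ε := by
          apply mul_le_mul_of_nonneg_left (le_of_lt hxε) (by positivity)
        have hxS' : ‖p x - p 0‖ ≤ 2*M*x := hxS
        linarith
      have hdx : ‖d x‖ ≤ M := hbd x hpx
      have hlo := (hasDerivAt_iff_isLittleO.1 (hd x)).def hM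
      have hIoc : Ioc x z ∈ nhdsWithin x (Ioi x) := Ioc_mem_nhdsGT_of_mem ⟨le_refl x, hz⟩
      have hlo' : ∀ᶠ u in nhdsWithin x (Ioi x),
          ‖p u - p x - (u - x) • d x‖ ≤ M * ‖u - x‖ :=
        nhdsWithin_le_nhds hlo
      have : ∀ᶠ u in nhdsWithin x (Ioi x), u ∈ S ∩ Ioc x z := by
        filter_upwards [hlo', hIoc, self_mem_nhdsWithin] with u hu huIoc huIoi
        refine ⟨?_, huIoc⟩
        have hux : x < u := huIoi
        have h1 : ‖p u - p x‖ ≤ ‖p u - p x - (u - x) • d x‖ + ‖(u - x) • d x‖ := by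
          have := norm_add_le (p u - p x - (u - x) • d x) ((u - x) • d x)
          simpa using this
        have h2 : ‖(u - x) • d x‖ ≤ (u - x) * M := by
          rw [norm_smul]
          have : ‖(u:ℝ) - x‖ = u - x := by
            rw [Real.norm_eq_abs, abs_of_nonneg (by linarith)]
          rw [this]
          exact mul_le_mul_of_nonneg_left hdx (by linarith)
        have h3 : ‖(u:ℝ) - x‖ = u - x := by
          rw [Real.norm_eq_abs, abs_of_nonneg (by linarith)]
        have h4 : ‖p u - p x‖ ≤ 2*M*(u - x) := by
          rw [h3] at hu; nlinarith
        have h5 : ‖p u - p 0‖ ≤ ‖p u - p x‖ + ‖p x - p 0‖ := by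
          have := norm_add_le (p u - p x) (p x - p 0); simpa using this
        have hxS' : ‖p x - p 0‖ ≤ 2*M*x := hxS
        show ‖p u - p 0‖ ≤ 2*M*u
        nlinarith
      rcases this.exists with ⟨u, hu⟩
      exact ⟨u, hu⟩
  exact fun u hu => key hu

theorem crossing_time_second_deriv_y
    (f g : ℝ × ℝ → ℝ) (hf : ContDiff ℝ 3 f) (hg : ContDiff ℝ 3 g)
    (hf0 : f (0, 0) ≠ 0)
    (X Y : ℝ → ℝ → ℝ → ℝ)
    (hX0 : ∀ x y, X 0 x y = x) (hY0 : ∀ x y, Y 0 x y = y)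
    (hXflow : ∀ t x y, HasDerivAt (fun s => X s x y) (f (X t x y, Y t x y)) t)
    (hYflow : ∀ t x y, HasDerivAt (fun s => Y s x y) (g (X t x y, Y t x y)) t)
    (T : ℝ × ℝ → ℝ) (hT0 : T (0, 0) = 0)
    (hT : ∃ U ∈ nhds ((0, 0) : ℝ × ℝ),
      ContDiffOn ℝ 2 T U ∧ ∀ p ∈ U, X (T p) p.1 p.2 = -p.1) :
    deriv (fun y => deriv (fun y' => T (0, y')) y) 0 = 0 := by
  obtain ⟨U, hU, hTC2, hTX⟩ := hT
  -- radius where f keeps its sign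
  have hfc : ContinuousAt f (0, 0) := hf.continuous.continuousAt
  have hb : Metric.ball (f (0,0)) (|f (0,0)|/2) ∈ nhds (f (0,0)) :=
    Metric.ball_mem_nhds _ (by positivity)
  obtain ⟨r, hrpos, hrball⟩ := Metric.nhds_basis_closedBall.mem_iff.1 (hfc hb)
  have hsign : ∀ q : ℝ × ℝ, ‖q‖ ≤ r → |f q - f (0,0)| < |f (0,0)|/2 := by
    intro q hq
    have : q ∈ Metric.closedBall ((0,0) : ℝ × ℝ) r := by
      have h00 : ((0,0) : ℝ × ℝ) = 0 := rfl
      rw [h00, Metric.mem_closedBall, dist_zero_right]; exact hq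
    have := hrball this
    simpa [Real.dist_eq] using this
  -- bound on f, g on the closed ball
  obtain ⟨Cf, hCf⟩ := (isCompact_closedBall ((0,0):ℝ×ℝ) r).exists_bound_of_continuousOn
    hf.continuous.continuousOn
  obtain ⟨Cg, hCg⟩ := (isCompact_closedBall ((0,0):ℝ×ℝ) r).exists_bound_of_continuousOn
    hg.continuous.continuousOn
  set M : ℝ := max 1 (max Cf Cg) with hMdef
  have hM : 0 < M := lt_of_lt_of_le one_pos (le_max_left _ _)
  set ε : ℝ := r/(4*M) with hεdef
  have hεpos : 0 < ε := by positivity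
  have hεM : 2*M*ε ≤ r/2 := by
    have hMne : M ≠ 0 := ne_of_gt hM
    have : 2*M*ε = r/2 := by rw [hεdef]; field_simp; ring
    linarith
  -- key: T (0, y) = 0 for small y
  have hkey : ∀ y : ℝ, |y| ≤ r/2 → (((0:ℝ), y) ∈ U) → |T (0, y)| ≤ ε → T (0, y) = 0 := by
    intro y hy hyU hyT
    set pth : ℝ → ℝ × ℝ := fun s => (X s 0 y, Y s 0 y) with hpth
    set d : ℝ → ℝ × ℝ := fun s => (f (pth s), g (pth s)) with hd
    have hpd : ∀ s, HasDerivAt pth (d s) s := fun s => (hXflow s 0 y).prodMk (hYflow s 0 y)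
    have hbd : ∀ s, ‖pth s‖ ≤ r → ‖d s‖ ≤ M := by
      intro s hs
      have hmem : pth s ∈ Metric.closedBall ((0,0):ℝ×ℝ) r := by
        have h00 : ((0,0) : ℝ × ℝ) = 0 := rfl
        rw [h00, Metric.mem_closedBall, dist_zero_right]; exact hs
      have h1 : ‖f (pth s)‖ ≤ Cf := hCf _ hmem
      have h2 : ‖g (pth s)‖ ≤ Cg := hCg _ hmem
      rw [hd]
      have : ‖(f (pth s), g (pth s))‖ = max ‖f (pth s)‖ ‖g (pth s)‖ := rfl
      rw [this]
      apply max_le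
      · exact le_trans h1 (le_trans (le_max_left _ _) (le_max_right 1 _))
      · exact le_trans h2 (le_trans (le_max_right _ _) (le_max_right 1 _))
    have hp0 : ‖pth 0‖ ≤ r/2 := by
      have : pth 0 = (0, y) := by simp [hpth, hX0, hY0]
      rw [this]
      have : ‖((0:ℝ), y)‖ = max ‖(0:ℝ)‖ ‖y‖ := rfl
      rw [this]
      simp [Real.norm_eq_abs]
      exact hy
    -- the path stays in the ball on [-ε, ε]
    have hstay : ∀ s ∈ Icc (-ε) ε, ‖pth s‖ ≤ r := by
      have hpos := escape_aux pth d M r ε hM hεpos hεM hpd hbd hp0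
      have hneg : ∀ u ∈ Icc (0:ℝ) ε, ‖pth (-u) - pth 0‖ ≤ 2*M*u := by
        have := escape_aux (fun u => pth (-u)) (fun u => (-1 : ℝ) • d (-u)) M r ε hM hεpos hεM
          (fun s => by
            have := (hpd (-s)).scomp s (hasDerivAt_neg s)
            exact this)
          (fun s hs => by
            rw [norm_smul]; simpa using hbd (-s) hs)
          (by simpa using hp0)
        intro u hu
        have h := this u hu
        simpa using h
      intro s hs
      rcases le_or_gt 0 s with h0 | h0
      · have := hpos s ⟨h0, hs.2⟩
        have h1 : ‖pth s‖ ≤ ‖pth s - pth 0‖ + ‖pth 0‖ := by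
          have := norm_add_le (pth s - pth 0) (pth 0); simpa using this
        have h2 : 2*M*s ≤ 2*M*ε := mul_le_mul_of_nonneg_left hs.2 (by positivity)
        linarith
      · have hmem : -s ∈ Icc (0:ℝ) ε := ⟨by linarith, by linarith [hs.1]⟩
        have := hneg (-s) hmem
        rw [neg_neg] at this
        have h1 : ‖pth s‖ ≤ ‖pth s - pth 0‖ + ‖pth 0‖ := by
          have := norm_add_le (pth s - pth 0) (pth 0); simpa using this
        have h2 : 2*M*(-s) ≤ 2*M*ε := mul_le_mul_of_nonneg_left hmem.2 (by positivity)
        linarith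
    -- s ↦ X s 0 y is injective on [-ε, ε]
    set h : ℝ → ℝ := fun s => X s 0 y with hh
    have hderiv : ∀ s, deriv h s = f (pth s) := fun s => (hXflow s 0 y).deriv
    have hhdiff : Continuous h :=
      continuous_iff_continuousAt.2 fun s => (hXflow s 0 y).continuousAt
    have hinj : InjOn h (Icc (-ε) ε) := by
      rcases lt_or_gt_of_ne hf0 with hneg | hpos
      · apply StrictAntiOn.injOn
        apply strictAntiOn_of_deriv_neg (convex_Icc _ _) hhdiff.continuousOn
        intro x hx
        rw [interior_Icc] at hx
        rw [hderiv]
        have := hsign (pth x) (hstay x ⟨le_of_lt hx.1, le_of_lt hx.2⟩)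
        rw [abs_of_neg hneg] at this
        have habs := abs_lt.1 this
        linarith [habs.2]
      · apply StrictMonoOn.injOn
        apply strictMonoOn_of_deriv_pos (convex_Icc _ _) hhdiff.continuousOn
        intro x hx
        rw [interior_Icc] at hx
        rw [hderiv]
        have := hsign (pth x) (hstay x ⟨le_of_lt hx.1, le_of_lt hx.2⟩)
        rw [abs_of_pos hpos] at this
        have habs := abs_lt.1 this
        linarith [habs.1]
    have hT1 : h (T (0, y)) = 0 := by
      have := hTX (0, y) hyU
      simpa [hh] using this
    have hT2 : h 0 = 0 := by simp [hh, hX0]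
    have hmem1 : T (0, y) ∈ Icc (-ε) ε := abs_le.1 hyT |>.imp id id |> fun h => ⟨h.1, h.2⟩
    have hmem2 : (0:ℝ) ∈ Icc (-ε) ε := ⟨by linarith, le_of_lt hεpos⟩
    exact hinj hmem1 hmem2 (hT1.trans hT2.symm)
  -- eventual facts
  have hmcont : Continuous (fun y : ℝ => ((0:ℝ), y)) := continuous_const.prodMk continuous_id
  have htm : Tendsto (fun y : ℝ => ((0:ℝ), y)) (nhds 0) (nhds ((0,0) : ℝ × ℝ)) := by
    have := hmcont.tendsto 0
    simpa using this
  have hev1 : ∀ᶠ y in nhds (0:ℝ), ((0:ℝ), y) ∈ U := htm hU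
  have hTcont : ContinuousAt T (0, 0) := hTC2.continuousOn.continuousAt hU
  have htT : Tendsto (fun y : ℝ => T (0, y)) (nhds 0) (nhds 0) := by
    have := hTcont.tendsto.comp htm
    rwa [hT0] at this
  have hev2 : ∀ᶠ y in nhds (0:ℝ), |T (0, y)| ≤ ε := by
    have := htT (Metric.closedBall_mem_nhds (0:ℝ) hεpos)
    filter_upwards [this] with y hy
    simpa [Real.dist_eq] using hy
  have hev0 : ∀ᶠ y in nhds (0:ℝ), |y| ≤ r/2 := by
    have : Metric.closedBall (0:ℝ) (r/2) ∈ nhds (0:ℝ) :=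
      Metric.closedBall_mem_nhds _ (by positivity)
    filter_upwards [this] with y hy
    simpa [Real.dist_eq] using hy
  have heq : (fun y' : ℝ => T (0, y')) =ᶠ[nhds (0:ℝ)] fun _ => (0:ℝ) := by
    filter_upwards [hev0, hev1, hev2] with y h0 h1 h2
    exact hkey y h0 h1 h2
  have heqd : deriv (fun y' : ℝ => T (0, y')) =ᶠ[nhds (0:ℝ)] deriv (fun _ => (0:ℝ)) := heq.deriv
  have heqd' : (fun y => deriv (fun y' : ℝ => T (0, y')) y) =ᶠ[nhds (0:ℝ)] fun _ => (0:ℝ) := by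
    filter_upwards [heqd] with y hy
    simpa using hy
  rw [heqd'.deriv_eq]
  simp
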